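/- Let L be an SPS lattice and S a distributive covering square of L. Then the equivalence relation on L[S] whose only nontrivial classes are {z_{l,1}, x_{l,1}}, …, {z_{l,n}, x_{l,n}}, {t, i}, {z_{r,1}, x_{r,1}}, …, {z_{r,m}, x_{r,m}} is a congruence relation of L[S]. -/

import Mathlib

namespace ForkCongruence

/-- A congruence of a lattice: an equivalence relation compatible with `⊔` and `⊓`. -/
structure LatCon (K : Type*) [Lattice K] where
  rel : K → K → Prop
  refl : ∀ x, rel x x
  symm : ∀ {x y}, rel x y → rel y x
  trans : ∀ {x y z}, rel x y → rel y z → rel x z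
  sup_comp : ∀ {a b c d}, rel a b → rel c d → rel (a ⊔ c) (b ⊔ d)
  inf_comp : ∀ {a b c d}, rel a b → rel c d → rel (a ⊓ c) (b ⊓ d)

namespace LatCon

variable {K : Type*} [Lattice K]

theorem rel_ext {θ ψ : LatCon K} (h : θ.rel = ψ.rel) : θ = ψ := by
  cases θ; cases ψ; cases h; rfl

instance : PartialOrder (LatCon K) where
  le θ ψ := ∀ ⦃x y⦄, θ.rel x y → ψ.rel x y
  le_refl _ _ _ h := h
  le_trans _ _ _ h₁ h₂ _ _ h := h₂ (h₁ h)
  le_antisymm θ ψ h₁ h₂ :=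
    rel_ext (by funext x y; exact propext ⟨fun h => h₁ h, fun h => h₂ h⟩)

/-- The smallest lattice congruence containing a binary relation. -/
def gen (s : K → K → Prop) : LatCon K where
  rel x y := ∀ θ : LatCon K, (∀ a b, s a b → θ.rel a b) → θ.rel x y
  refl x _ _ := LatCon.refl _ x
  symm h θ hs := θ.symm (h θ hs)
  trans h₁ h₂ θ hs := θ.trans (h₁ θ hs) (h₂ θ hs)
  sup_comp h₁ h₂ θ hs := θ.sup_comp (h₁ θ hs) (h₂ θ hs)
  inf_comp h₁ h₂ θ hs := θ.inf_comp (h₁ θ hs) (h₂ θ hs)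

instance : SemilatticeSup (LatCon K) where
  sup θ ψ := gen (fun x y => θ.rel x y ∨ ψ.rel x y)
  le_sup_left θ ψ x y h χ hχ := hχ x y (Or.inl h)
  le_sup_right θ ψ x y h χ hχ := hχ x y (Or.inr h)
  sup_le θ ψ χ h₁ h₂ x y h := h χ (fun a b hab => hab.elim (fun w => h₁ w) (fun w => h₂ w))

instance : SemilatticeInf (LatCon K) where
  inf θ ψ :=
    { rel := fun x y => θ.rel x y ∧ ψ.rel x y
      refl := fun x => ⟨θ.refl x, ψ.refl x⟩
      symm := fun h => ⟨θ.symm h.1, ψ.symm h.2⟩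
      trans := fun h₁ h₂ => ⟨θ.trans h₁.1 h₂.1, ψ.trans h₁.2 h₂.2⟩
      sup_comp := fun h₁ h₂ => ⟨θ.sup_comp h₁.1 h₂.1, ψ.sup_comp h₁.2 h₂.2⟩
      inf_comp := fun h₁ h₂ => ⟨θ.inf_comp h₁.1 h₂.1, ψ.inf_comp h₁.2 h₂.2⟩ }
  inf_le_left _ _ _ _ h := h.1
  inf_le_right _ _ _ _ h := h.2
  le_inf _ _ _ h₁ h₂ _ _ h := ⟨h₁ h, h₂ h⟩

instance : Lattice (LatCon K) :=
  { (inferInstance : SemilatticeSup (LatCon K)),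
    (inferInstance : SemilatticeInf (LatCon K)) with }

instance : OrderBot (LatCon K) where
  bot :=
    { rel := Eq
      refl := fun _ => rfl
      symm := Eq.symm
      trans := Eq.trans
      sup_comp := fun h₁ h₂ => by rw [h₁, h₂]
      inf_comp := fun h₁ h₂ => by rw [h₁, h₂] }
  bot_le θ x y h := h ▸ θ.refl x

/-- The principal congruence `con(a, b)`: the smallest congruence collapsing `a` and `b`. -/
def conOf (a b : K) : LatCon K := gen (fun x y => x = a ∧ y = b)

/-- The restriction of a congruence of `K` to a sublattice `L`. -/
def restrict (θ : LatCon K) (L : Sublattice K) : LatCon L where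
  rel x y := θ.rel ↑x ↑y
  refl x := θ.refl ↑x
  symm h := θ.symm h
  trans h₁ h₂ := θ.trans h₁ h₂
  sup_comp {a b c d} h₁ h₂ := by
    show θ.rel ↑(a ⊔ c) ↑(b ⊔ d)
    rw [Sublattice.coe_sup, Sublattice.coe_sup]
    exact θ.sup_comp h₁ h₂
  inf_comp {a b c d} h₁ h₂ := by
    show θ.rel ↑(a ⊓ c) ↑(b ⊓ d)
    rw [Sublattice.coe_inf, Sublattice.coe_inf]
    exact θ.inf_comp h₁ h₂

/-- A congruence `α` of the sublattice `L` extends to `K` if it is the restriction of some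
congruence of `K`. -/
def ExtendsTo {L : Sublattice K} (α : LatCon L) : Prop :=
  ∃ θ : LatCon K, θ.restrict L = α

/-- The minimal extension of a congruence of a sublattice `L` of `K`: the smallest congruence
of `K` containing it (viewed as a set of pairs). -/
def minExt {L : Sublattice K} (α : LatCon L) : LatCon K :=
  gen (fun x y => ∃ (hx : x ∈ L) (hy : y ∈ L), α.rel ⟨x, hx⟩ ⟨y, hy⟩)

end LatCon

/-- `K` is a congruence-preserving extension of its sublattice `L`: the restriction map is a
bijection from the congruences of `K` onto the congruences of `L`. -/
def IsCongPresExt {K : Type*} [Lattice K] (L : Sublattice K) : Prop :=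
  Function.Bijective (fun θ : LatCon K => θ.restrict L)

/-- A lattice is semimodular if `x ⊓ y ⋖ y` implies `x ⋖ x ⊔ y`. -/
def IsSemimodular (K : Type*) [Lattice K] : Prop :=
  ∀ x y : K, x ⊓ y ⋖ y → x ⋖ x ⊔ y

/-- A lattice is slim if its set of join-irreducible elements contains no three-element
antichain. -/
def IsSlim (K : Type*) [Lattice K] : Prop :=
  ¬ ∃ x y z : K, SupIrred x ∧ SupIrred y ∧ SupIrred z ∧
      ¬x ≤ y ∧ ¬y ≤ x ∧ ¬x ≤ z ∧ ¬z ≤ x ∧ ¬y ≤ z ∧ ¬z ≤ y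

/-- An SPS lattice: slim, planar (which follows from slimness together with semimodularity)
and semimodular. Finiteness is assumed separately as `[Finite K]`. -/
def IsSPS (K : Type*) [Lattice K] : Prop :=
  IsSemimodular K ∧ IsSlim K

/-- A covering square `S = {o, a_l, a_r, i}` of a lattice. -/
structure CovSquare (K : Type*) [Lattice K] where
  o : K
  al : K
  ar : K
  i : K
  al_ne_ar : al ≠ ar
  inf_eq : al ⊓ ar = o
  sup_eq : al ⊔ ar = i
  o_covby_al : o ⋖ al
  o_covby_ar : o ⋖ ar
  al_covby_i : al ⋖ i
  ar_covby_i : ar ⋖ i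

namespace CovSquare

variable {K : Type*} [Lattice K]

/-- A covering square is tight if `a_l` and `a_r` are the only lower covers of `i`. -/
def Tight (S : CovSquare K) : Prop :=
  ∀ x : K, x ⋖ S.i → x = S.al ∨ x = S.ar

/-- A covering square is wide if it is not tight. -/
def Wide (S : CovSquare K) : Prop := ¬ S.Tight

/-- A covering square is distributive if the principal ideal `↓i` is a distributive lattice. -/
def Distributive (S : CovSquare K) : Prop :=
  ∀ x y z : K, x ≤ S.i → y ≤ S.i → z ≤ S.i →
    x ⊓ (y ⊔ z) = (x ⊓ y) ⊔ (x ⊓ z)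

end CovSquare

/-- `K` together with the data below is the fork extension `L[S]` of the sublattice `L` of `K`
at the covering square `S` of `L`. The elements `xl k, yl k, zl k` represent
`x_{l,k+1}, y_{l,k+1}, z_{l,k+1}` of the construction (`0`-based indexing), and similarly
on the right. -/
structure ForkExtension (K : Type*) [Lattice K] (L : Sublattice K) (S : CovSquare L) where
  n : ℕ
  m : ℕ
  npos : 0 < n
  mpos : 0 < m
  t : K
  zl : ℕ → K
  zr : ℕ → K
  xl : ℕ → L
  yl : ℕ → L
  xr : ℕ → L
  yr : ℕ → L
  xl_zero : xl 0 = S.al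
  yl_zero : yl 0 = S.o
  xr_zero : xr 0 = S.ar
  yr_zero : yr 0 = S.o
  -- the successive covering squares `{y_{l,k+1}, x_{l,k+1}, y_{l,k}, x_{l,k}}` in `L`
  xl_succ_covby : ∀ k, k + 1 < n → xl (k + 1) ⋖ xl k
  yl_succ_covby : ∀ k, k + 1 < n → yl (k + 1) ⋖ yl k
  yl_covby_xl : ∀ k, k < n → yl k ⋖ xl k
  xl_succ_ne_yl : ∀ k, k + 1 < n → xl (k + 1) ≠ yl k
  xl_inf_yl : ∀ k, k + 1 < n → xl (k + 1) ⊓ yl k = yl (k + 1)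
  xl_sup_yl : ∀ k, k + 1 < n → xl (k + 1) ⊔ yl k = xl k
  -- `n` is largest possible
  left_max : ¬ ∃ x : L, x ⋖ xl (n - 1) ∧ x ≠ yl (n - 1) ∧
      x ⊓ yl (n - 1) ⋖ x ∧ x ⊓ yl (n - 1) ⋖ yl (n - 1) ∧ x ⊔ yl (n - 1) = xl (n - 1)
  -- the same on the right
  xr_succ_covby : ∀ k, k + 1 < m → xr (k + 1) ⋖ xr k
  yr_succ_covby : ∀ k, k + 1 < m → yr (k + 1) ⋖ yr k
  yr_covby_xr : ∀ k, k < m → yr k ⋖ xr k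
  xr_succ_ne_yr : ∀ k, k + 1 < m → xr (k + 1) ≠ yr k
  xr_inf_yr : ∀ k, k + 1 < m → xr (k + 1) ⊓ yr k = yr (k + 1)
  xr_sup_yr : ∀ k, k + 1 < m → xr (k + 1) ⊔ yr k = xr k
  right_max : ¬ ∃ x : L, x ⋖ xr (m - 1) ∧ x ≠ yr (m - 1) ∧
      x ⊓ yr (m - 1) ⋖ x ∧ x ⊓ yr (m - 1) ⋖ yr (m - 1) ∧ x ⊔ yr (m - 1) = xr (m - 1)
  -- the new elements
  t_not_mem : t ∉ L
  zl_not_mem : ∀ k, k < n → zl k ∉ L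
  zr_not_mem : ∀ k, k < m → zr k ∉ L
  mem_or_new : ∀ x : K, x ∈ L ∨ x = t ∨ (∃ k < n, x = zl k) ∨ (∃ k < m, x = zr k)
  -- `{o, z_{l,1}, z_{r,1}, a_l, a_r, t, i}` is a sublattice isomorphic to `S7`
  zl_sup_zr : zl 0 ⊔ zr 0 = t
  zl_zero_covby_t : zl 0 ⋖ t
  zr_zero_covby_t : zr 0 ⋖ t
  t_covby_i : t ⋖ (S.i : K)
  -- the chains `z_{l,1} ≻ ⋯ ≻ z_{l,n}` and `z_{r,1} ≻ ⋯ ≻ z_{r,m}`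
  zl_succ_covby : ∀ k, k + 1 < n → zl (k + 1) ⋖ zl k
  zr_succ_covby : ∀ k, k + 1 < m → zr (k + 1) ⋖ zr k
  -- `y_{l,k} ⋖ z_{l,k} ⋖ x_{l,k}` in `K`, and similarly on the right
  yl_covby_zl : ∀ k, k < n → (yl k : K) ⋖ zl k
  zl_covby_xl : ∀ k, k < n → zl k ⋖ (xl k : K)
  yr_covby_zr : ∀ k, k < m → (yr k : K) ⋖ zr k
  zr_covby_xr : ∀ k, k < m → zr k ⋖ (xr k : K)

namespace ForkExtension

variable {K : Type*} [Lattice K] {L : Sublattice K} {S : CovSquare L}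

/-- `x_{l,k+1}` is a (left) protrusion: it has at least three lower covers in `L`. -/
def ProtL (F : ForkExtension K L S) (k : ℕ) : Prop :=
  k < F.n ∧ ∃ u v w : L, u ≠ v ∧ u ≠ w ∧ v ≠ w ∧
    u ⋖ F.xl k ∧ v ⋖ F.xl k ∧ w ⋖ F.xl k

/-- `x_{r,k+1}` is a (right) protrusion: it has at least three lower covers in `L`. -/
def ProtR (F : ForkExtension K L S) (k : ℕ) : Prop :=
  k < F.m ∧ ∃ u v w : L, u ≠ v ∧ u ≠ w ∧ v ≠ w ∧
    u ⋖ F.xr k ∧ v ⋖ F.xr k ∧ w ⋖ F.xr k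

end ForkExtension

/-! ### Auxiliary general lattice lemmas -/

section GenLattice

variable {α : Type*} [Lattice α]

lemma covby_eq_top {a b c : α} (h : a ⋖ b) (h2 : a < c) (h3 : c ≤ b) : c = b := by
  by_contra hne
  exact h.2 h2 (h3.lt_of_ne hne)

lemma covby_mem_pair {a b c : α} (h : a ⋖ b) (h2 : a ≤ c) (h3 : c ≤ b) : c = a ∨ c = b := by
  rcases h2.lt_or_eq with h2'|h2'
  · exact Or.inr (covby_eq_top h h2' h3)
  · exact Or.inl h2'.symm

lemma eq_of_covby_covby_le {p q x : α} (hp : p ⋖ x) (hq : q ⋖ x) (h : p ≤ q) : p = q := by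
  by_contra hne
  exact hp.2 (h.lt_of_ne hne) hq.lt

lemma covby_sup_eq {p q x : α} (hp : p ⋖ x) (hq : q ⋖ x) (hne : p ≠ q) : p ⊔ q = x := by
  have h1 : ¬ p ≤ q := fun h => hne (eq_of_covby_covby_le hp hq h)
  exact covby_eq_top hq (right_lt_sup.mpr h1) (sup_le hp.lt.le hq.lt.le)

lemma exists_supIrred_le_not_le [WellFoundedLT α] {a b : α} (h : ¬ a ≤ b) :
    ∃ q : α, SupIrred q ∧ q ≤ a ∧ ¬ q ≤ b := by
  revert h
  refine WellFoundedLT.induction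
    (motive := fun a => ¬ a ≤ b → ∃ q : α, SupIrred q ∧ q ≤ a ∧ ¬ q ≤ b) a ?_
  intro a ih h
  by_cases ha : SupIrred a
  · exact ⟨a, ha, le_rfl, h⟩
  rw [not_supIrred] at ha
  obtain ha | ⟨c, d, rfl, hc, hd⟩ := ha
  · exact absurd ((ha inf_le_left).trans inf_le_right) h
  by_cases hcb : c ≤ b
  · have hdb : ¬ d ≤ b := fun hdb => h (sup_le hcb hdb)
    obtain ⟨q, hq, hqd, hqb⟩ := ih d hd hdb
    exact ⟨q, hq, hqd.trans le_sup_right, hqb⟩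
  · obtain ⟨q, hq, hqc, hqb⟩ := ih c hc hcb
    exact ⟨q, hq, hqc.trans le_sup_left, hqb⟩

/-- In a finite slim lattice whose principal ideal `↓i` is distributive, no element of `↓i`
has three distinct lower covers. -/
lemma atmost_two_covers [Finite α] (hslim : IsSlim α) {i : α}
    (hdist : ∀ x y z : α, x ≤ i → y ≤ i → z ≤ i → x ⊓ (y ⊔ z) = (x ⊓ y) ⊔ (x ⊓ z))
    {x u v w : α} (hx : x ≤ i) (hu : u ⋖ x) (hv : v ⋖ x) (hw : w ⋖ x) :
    u = v ∨ u = w ∨ v = w := by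
  by_contra hcon
  push_neg at hcon
  obtain ⟨huv, huw, hvw⟩ := hcon
  have key : ∀ p q r : α, p ⋖ x → q ⋖ x → r ⋖ x → p ≠ r → q ≠ r → ¬ p ⊓ q ≤ r := by
    intro p q r hp hq hr hpr hqr hle
    have hrq : r ⊔ q = x := covby_sup_eq hr hq (fun h => hqr h.symm)
    have h1 : p = (p ⊓ r) ⊔ (p ⊓ q) := by
      rw [← hdist p r q (hp.lt.le.trans hx) (hr.lt.le.trans hx) (hq.lt.le.trans hx), hrq,
        inf_eq_left.mpr hp.lt.le]
    have h2 : p ≤ r := by rw [h1]; exact sup_le inf_le_right hle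
    exact hpr (eq_of_covby_covby_le hp hr h2)
  have h1 : ¬ u ⊓ v ≤ w := key u v w hu hv hw huw hvw
  have h2 : ¬ u ⊓ w ≤ v := key u w v hu hw hv huv (fun h => hvw h.symm)
  have h3 : ¬ v ⊓ w ≤ u := key v w u hv hw hu (fun h => huv h.symm) (fun h => huw h.symm)
  obtain ⟨qa, hqa, hqa1, hqa2⟩ := exists_supIrred_le_not_le (a := v ⊓ w) (b := u ⊓ v ⊓ w)
    (fun hh => h3 (hh.trans (inf_le_left.trans inf_le_left)))
  obtain ⟨qb, hqb, hqb1, hqb2⟩ := exists_supIrred_le_not_le (a := u ⊓ w) (b := u ⊓ v ⊓ w)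
    (fun hh => h2 (hh.trans (inf_le_left.trans inf_le_right)))
  obtain ⟨qc, hqc, hqc1, hqc2⟩ := exists_supIrred_le_not_le (a := u ⊓ v) (b := u ⊓ v ⊓ w)
    (fun hh => h1 (hh.trans inf_le_right))
  refine hslim ⟨qa, qb, qc, hqa, hqb, hqc, ?_, ?_, ?_, ?_, ?_, ?_⟩
  · exact fun h => hqa2 (le_inf (le_inf (h.trans (hqb1.trans inf_le_left))
      (hqa1.trans inf_le_left)) (hqa1.trans inf_le_right))
  · exact fun h => hqb2 (le_inf (le_inf (hqb1.trans inf_le_left)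
      (h.trans (hqa1.trans inf_le_left))) (hqb1.trans inf_le_right))
  · exact fun h => hqa2 (le_inf (le_inf (h.trans (hqc1.trans inf_le_left))
      (hqa1.trans inf_le_left)) (hqa1.trans inf_le_right))
  · exact fun h => hqc2 (le_inf (le_inf (hqc1.trans inf_le_left)
      (hqc1.trans inf_le_right)) (h.trans (hqa1.trans inf_le_right)))
  · exact fun h => hqb2 (le_inf (le_inf (hqb1.trans inf_le_left)
      (h.trans (hqc1.trans inf_le_right))) (hqb1.trans inf_le_right))
  · exact fun h => hqc2 (le_inf (le_inf (hqc1.trans inf_le_left)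
      (hqc1.trans inf_le_right)) (h.trans (hqb1.trans inf_le_right)))

lemma chain_le {β : Type*} [Preorder β] {f : ℕ → β} {n : ℕ}
    (hf : ∀ k, k + 1 < n → f (k + 1) < f k) : ∀ {j k : ℕ}, j ≤ k → k < n → f k ≤ f j := by
  intro j k hjk
  induction hjk with
  | refl => exact fun _ => le_rfl
  | @step m h ih =>
    intro hm
    exact ((hf m hm).le).trans (ih (Nat.lt_of_succ_lt hm))

lemma chain_lt {β : Type*} [Preorder β] {f : ℕ → β} {n : ℕ}
    (hf : ∀ k, k + 1 < n → f (k + 1) < f k) {j k : ℕ} (hjk : j < k) (hk : k < n) :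
    f k < f j :=
  (chain_le hf hjk hk).trans_lt (hf j (Nat.lt_of_le_of_lt hjk hk))

end GenLattice

/-! ### Swapping left and right -/

/-- The covering square with `a_l` and `a_r` interchanged. -/
def CovSquare.swap {K : Type*} [Lattice K] (S : CovSquare K) : CovSquare K where
  o := S.o
  al := S.ar
  ar := S.al
  i := S.i
  al_ne_ar := S.al_ne_ar.symm
  inf_eq := by rw [inf_comm]; exact S.inf_eq
  sup_eq := by rw [sup_comm]; exact S.sup_eq
  o_covby_al := S.o_covby_ar
  o_covby_ar := S.o_covby_al
  al_covby_i := S.ar_covby_i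
  ar_covby_i := S.al_covby_i

namespace ForkExtension

variable {K : Type*} [Lattice K] {L : Sublattice K} {S : CovSquare L}

/-- The fork extension with left and right interchanged. -/
def swap (F : ForkExtension K L S) : ForkExtension K L S.swap where
  n := F.m
  m := F.n
  npos := F.mpos
  mpos := F.npos
  t := F.t
  zl := F.zr
  zr := F.zl
  xl := F.xr
  yl := F.yr
  xr := F.xl
  yr := F.yl
  xl_zero := F.xr_zero
  yl_zero := F.yr_zero
  xr_zero := F.xl_zero
  yr_zero := F.yl_zero
  xl_succ_covby := F.xr_succ_covby
  yl_succ_covby := F.yr_succ_covby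
  yl_covby_xl := F.yr_covby_xr
  xl_succ_ne_yl := F.xr_succ_ne_yr
  xl_inf_yl := F.xr_inf_yr
  xl_sup_yl := F.xr_sup_yr
  left_max := F.right_max
  xr_succ_covby := F.xl_succ_covby
  yr_succ_covby := F.yl_succ_covby
  yr_covby_xr := F.yl_covby_xl
  xr_succ_ne_yr := F.xl_succ_ne_yl
  xr_inf_yr := F.xl_inf_yl
  xr_sup_yr := F.xl_sup_yl
  right_max := F.left_max
  t_not_mem := F.t_not_mem
  zl_not_mem := F.zr_not_mem
  zr_not_mem := F.zl_not_mem
  mem_or_new := by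
    intro x
    rcases F.mem_or_new x with h | h | h | h
    · exact Or.inl h
    · exact Or.inr (Or.inl h)
    · exact Or.inr (Or.inr (Or.inr h))
    · exact Or.inr (Or.inr (Or.inl h))
  zl_sup_zr := by rw [sup_comm]; exact F.zl_sup_zr
  zl_zero_covby_t := F.zr_zero_covby_t
  zr_zero_covby_t := F.zl_zero_covby_t
  t_covby_i := F.t_covby_i
  zl_succ_covby := F.zr_succ_covby
  zr_succ_covby := F.zl_succ_covby
  yl_covby_zl := F.yr_covby_zr
  zl_covby_xl := F.zr_covby_xr
  yr_covby_zr := F.yl_covby_zl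
  zr_covby_xr := F.zl_covby_xl

variable {K : Type*} [Lattice K] [Finite K] {L : Sublattice K} {S : CovSquare L}
  (F : ForkExtension K L S)

lemma coe_lt_coe {a b : L} : (a : K) < (b : K) ↔ a < b := by
  constructor
  · intro h; exact lt_of_le_of_ne h.le (fun he => h.ne (congrArg _ he))
  · intro h; exact lt_of_le_of_ne h.le (fun he => h.ne (Subtype.ext he))

lemma coe_le_coe' {a b : L} : (a : K) ≤ (b : K) ↔ a ≤ b := Iff.rfl

/-! ### Lemmas inside `L` -/

lemma xl_lt {j k : ℕ} (hjk : j < k) (hk : k < F.n) : F.xl k < F.xl j :=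
  chain_lt (fun k hk => (F.xl_succ_covby k hk).lt) hjk hk

lemma xl_anti {j k : ℕ} (hjk : j ≤ k) (hk : k < F.n) : F.xl k ≤ F.xl j :=
  chain_le (fun k hk => (F.xl_succ_covby k hk).lt) hjk hk

lemma yl_anti {j k : ℕ} (hjk : j ≤ k) (hk : k < F.n) : F.yl k ≤ F.yl j :=
  chain_le (fun k hk => (F.yl_succ_covby k hk).lt) hjk hk

lemma yl_le_o {k : ℕ} (hk : k < F.n) : F.yl k ≤ S.o := by
  have := F.yl_anti (Nat.zero_le k) hk
  rwa [F.yl_zero] at this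

lemma xl_le_al {k : ℕ} (hk : k < F.n) : F.xl k ≤ S.al := by
  have := F.xl_anti (Nat.zero_le k) hk
  rwa [F.xl_zero] at this

lemma xl_le_i {k : ℕ} (hk : k < F.n) : F.xl k ≤ S.i :=
  (F.xl_le_al hk).trans S.al_covby_i.lt.le

lemma not_xl_le_o : ∀ k, k < F.n → ¬ F.xl k ≤ S.o := by
  intro k
  induction k with
  | zero =>
    intro _ h
    rw [F.xl_zero] at h
    exact S.o_covby_al.lt.not_ge h
  | succ k ih =>
    intro hk h
    refine ih (Nat.lt_of_succ_lt hk) ?_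
    rw [← F.xl_sup_yl k hk]
    exact sup_le h (F.yl_le_o (Nat.lt_of_succ_lt hk))

lemma o_inf_xl {k : ℕ} (hk : k < F.n) : S.o ⊓ F.xl k = F.yl k := by
  have h1 : F.yl k ≤ S.o ⊓ F.xl k := le_inf (F.yl_le_o hk) (F.yl_covby_xl k hk).lt.le
  rcases covby_mem_pair (F.yl_covby_xl k hk) h1 inf_le_right with h|h
  · exact h
  · exact absurd (h ▸ inf_le_left) (F.not_xl_le_o k hk)

lemma lt_i_cases (hL : IsSPS L) (hS : S.Distributive) {u : L} (hu : u < S.i) :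
    u ≤ S.al ∨ u ≤ S.ar := by
  obtain ⟨v, huv, hv⟩ := exists_le_covBy_of_lt hu
  rcases atmost_two_covers hL.2 hS le_rfl hv S.al_covby_i S.ar_covby_i with h|h|h
  · exact Or.inl (huv.trans h.le)
  · exact Or.inr (huv.trans h.le)
  · exact absurd h S.al_ne_ar

/-- `v ⊓ y ⋖ v` when `y ⋖ v ⊔ y` in a distributive situation. -/
lemma transpose_covby {i v y x : L}
    (hdist : ∀ a b c : L, a ≤ i → b ≤ i → c ≤ i → a ⊓ (b ⊔ c) = (a ⊓ b) ⊔ (a ⊓ c))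
    (hvi : v ≤ i) (hyi : y ≤ i) (hvy : ¬ v ≤ y) (hyx : y ⋖ x) (hsup : v ⊔ y = x) :
    v ⊓ y ⋖ v := by
  constructor
  · exact lt_of_le_of_ne inf_le_left (fun h => hvy (inf_eq_left.mp h))
  · intro c hc hcv
    have hvx : v ≤ x := hsup ▸ le_sup_left
    have hcy : c ⊔ y ≤ x := sup_le (hcv.le.trans hvx) (hsup ▸ le_sup_right)
    rcases covby_mem_pair hyx le_sup_right hcy with h|h
    · exact hc.not_ge (le_inf hcv.le (sup_eq_right.mp h))
    · have hv2 : v = (v ⊓ c) ⊔ (v ⊓ y) := by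
        rw [← hdist v c y hvi (hcv.le.trans hvi) hyi, h, inf_eq_left.mpr hvx]
      rw [inf_eq_right.mpr hcv.le] at hv2
      have : v = c := by rw [hv2, sup_eq_left.mpr hc.le]
      exact hcv.ne' this

/-- The grid property: every element of `↓a_l` not below `o` is one of the `x_{l,k}`. -/
lemma grid (hL : IsSPS L) (hS : S.Distributive) :
    ∀ u : L, u ≤ S.al → ¬ u ≤ S.o → ∃ j, j < F.n ∧ u = F.xl j := by
  suffices h : ∀ d k, F.n - k = d → k < F.n →
      ∀ u : L, u ≤ F.xl k → ¬ u ≤ F.yl k → ∃ j, j < F.n ∧ u = F.xl j by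
    intro u h1 h2
    refine h (F.n - 0) 0 rfl F.npos u ?_ ?_
    · rwa [F.xl_zero]
    · rwa [F.yl_zero]
  intro d
  induction d with
  | zero => intro k hk0 hk; omega
  | succ d ih =>
    intro k hkd hk u hu1 hu2
    rcases hu1.lt_or_eq with hlt|heq
    swap
    · exact ⟨k, hk, heq⟩
    obtain ⟨v, huv, hv⟩ := exists_le_covBy_of_lt hlt
    have hvy : v ≠ F.yl k := fun h => hu2 (h ▸ huv)
    have hsq : v ⊔ F.yl k = F.xl k := covby_sup_eq hv (F.yl_covby_xl k hk) hvy
    by_cases hk1 : k + 1 < F.n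
    · have hx1 : F.xl (k + 1) ⋖ F.xl k := F.xl_succ_covby k hk1
      rcases atmost_two_covers hL.2 hS (F.xl_le_i hk) hv (F.yl_covby_xl k hk) hx1 with h|h|h
      · exact absurd h hvy
      · refine ih (k + 1) (by omega) hk1 u (h ▸ huv) (fun hy => hu2 (hy.trans ?_))
        exact (F.yl_succ_covby k hk1).lt.le
      · exact absurd h.symm (F.xl_succ_ne_yl k hk1)
    · exfalso
      have hkn : k = F.n - 1 := by omega
      subst hkn
      have hvy2 : ¬ v ≤ F.yl (F.n - 1) := fun h =>
        hvy (eq_of_covby_covby_le hv (F.yl_covby_xl _ hk) h)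
      have hyv2 : ¬ F.yl (F.n - 1) ≤ v := fun h =>
        hvy (eq_of_covby_covby_le (F.yl_covby_xl _ hk) hv h).symm
      have hyi : F.yl (F.n - 1) ≤ S.i :=
        (F.yl_le_o hk).trans (S.o_covby_al.lt.le.trans S.al_covby_i.lt.le)
      have hvi : v ≤ S.i := (hv.lt.le).trans (F.xl_le_i hk)
      refine F.left_max ⟨v, hv, hvy, ?_, ?_, hsq⟩
      · exact transpose_covby hS hvi hyi hvy2 (F.yl_covby_xl _ hk) hsq
      · have h2 := transpose_covby hS hyi hvi hyv2 hv (by rw [sup_comm]; exact hsq)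
        rwa [inf_comm] at h2

/-! ### Lemmas in `K` -/

lemma zl_le {j k : ℕ} (hjk : j ≤ k) (hk : k < F.n) : F.zl k ≤ F.zl j :=
  chain_le (fun k hk => (F.zl_succ_covby k hk).lt) hjk hk

lemma zl_lt {j k : ℕ} (hjk : j < k) (hk : k < F.n) : F.zl k < F.zl j :=
  chain_lt (fun k hk => (F.zl_succ_covby k hk).lt) hjk hk

lemma zl_lt_t {k : ℕ} (hk : k < F.n) : F.zl k < F.t :=
  (F.zl_le (Nat.zero_le k) hk).trans_lt F.zl_zero_covby_t.lt

lemma zl_le_t {k : ℕ} (hk : k < F.n) : F.zl k ≤ F.t := (F.zl_lt_t hk).le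

lemma zl_le_xl {k : ℕ} (hk : k < F.n) : F.zl k ≤ (F.xl k : K) := (F.zl_covby_xl k hk).lt.le

lemma yl_le_zl {k : ℕ} (hk : k < F.n) : (F.yl k : K) ≤ F.zl k := (F.yl_covby_zl k hk).lt.le

lemma zl_le_al {k : ℕ} (hk : k < F.n) : F.zl k ≤ (S.al : K) :=
  (F.zl_le_xl hk).trans (F.xl_le_al hk)

lemma t_lt_i : F.t < (S.i : K) := F.t_covby_i.lt

lemma zl_le_i' {k : ℕ} (hk : k < F.n) : F.zl k ≤ (S.i : K) :=
  (F.zl_le_t hk).trans F.t_lt_i.le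

lemma o_le_zl0 : (S.o : K) ≤ F.zl 0 := by
  have h := (F.yl_covby_zl 0 F.npos).lt.le
  rwa [F.yl_zero] at h

lemma zl_sup_yl_succ {k : ℕ} (hk : k + 1 < F.n) : F.zl (k + 1) ⊔ (F.yl k : K) = F.zl k := by
  have hk' : k < F.n := Nat.lt_of_succ_lt hk
  have h3 : ¬ (F.yl k : K) ≤ F.zl (k + 1) := by
    intro h
    have hne : (F.yl k : K) ≠ F.zl (k + 1) :=
      fun he => F.zl_not_mem (k + 1) hk (he ▸ (F.yl k).2)
    exact (F.yl_covby_zl k hk').2 (h.lt_of_ne hne) (F.zl_succ_covby k hk).lt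
  exact covby_eq_top (F.zl_succ_covby k hk) (left_lt_sup.mpr h3)
    (sup_le (F.zl_succ_covby k hk).lt.le (F.yl_le_zl hk'))

lemma zl_sup_yl_aux : ∀ d j, j + d < F.n → F.zl (j + d) ⊔ (F.yl j : K) = F.zl j := by
  intro d
  induction d with
  | zero => intro j hj; exact sup_eq_left.mpr (F.yl_le_zl hj)
  | succ d ih =>
    intro j hj
    have h2 : (F.yl (j + d) : K) ⊔ (F.yl j : K) = (F.yl j : K) :=
      sup_eq_right.mpr (F.yl_anti (Nat.le_add_right j d) (by omega))
    have step : F.zl (j + d + 1) ⊔ (F.yl j : K)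
        = (F.zl (j + d + 1) ⊔ (F.yl (j + d) : K)) ⊔ (F.yl j : K) := by
      rw [sup_assoc, h2]
    show F.zl (j + d + 1) ⊔ (F.yl j : K) = F.zl j
    rw [step, F.zl_sup_yl_succ (by omega), ih j (by omega)]

lemma zl_sup_yl' {j k : ℕ} (hjk : j ≤ k) (hk : k < F.n) :
    F.zl k ⊔ (F.yl j : K) = F.zl j := by
  obtain ⟨d, rfl⟩ := Nat.exists_eq_add_of_le hjk
  exact F.zl_sup_yl_aux d j hk

lemma not_zl_le_o : ∀ k, k < F.n → ¬ F.zl k ≤ (S.o : K) := by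
  intro k
  induction k with
  | zero =>
    intro hk h
    have hc := F.yl_covby_zl 0 hk
    rw [F.yl_zero] at hc
    exact hc.lt.not_ge h
  | succ k ih =>
    intro hk h
    refine ih (Nat.lt_of_succ_lt hk) ?_
    rw [← F.zl_sup_yl_succ hk]
    exact sup_le h (F.yl_le_o (Nat.lt_of_succ_lt hk))

lemma zl_injective {j k : ℕ} (hj : j < F.n) (hk : k < F.n) (h : F.zl j = F.zl k) : j = k := by
  rcases lt_trichotomy j k with hh|hh|hh
  · exact absurd h (F.zl_lt hh hk).ne'
  · exact hh
  · exact absurd h (F.zl_lt hh hj).ne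

lemma xl_injective {j k : ℕ} (hj : j < F.n) (hk : k < F.n) (h : F.xl j = F.xl k) : j = k := by
  rcases lt_trichotomy j k with hh|hh|hh
  · exact absurd h (F.xl_lt hh hk).ne'
  · exact hh
  · exact absurd h (F.xl_lt hh hj).ne

lemma not_zl_le_ar {k : ℕ} (hk : k < F.n) : ¬ F.zl k ≤ (S.ar : K) := by
  intro h
  refine F.not_zl_le_o k hk ?_
  have h2 : F.zl k ≤ (S.al : K) ⊓ (S.ar : K) := le_inf (F.zl_le_al hk) h
  rwa [← Sublattice.coe_inf, S.inf_eq] at h2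

lemma zl_ne_zr {k j : ℕ} (hk : k < F.n) (hj : j < F.m) : F.zl k ≠ F.zr j := by
  intro h
  exact F.not_zl_le_ar hk (h.le.trans (F.swap.zl_le_al hj))

lemma le_yl_of_le_zl {k : ℕ} (hk : k < F.n) {u : L} (h : (u : K) ≤ F.zl k) :
    u ≤ F.yl k := by
  have hm : ((u ⊔ F.yl k : L) : K) ≤ F.zl k := by
    rw [Sublattice.coe_sup]; exact sup_le h (F.yl_le_zl hk)
  rcases covby_mem_pair (F.yl_covby_zl k hk)
      (by rw [Sublattice.coe_sup]; exact le_sup_right) hm with hh|hh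
  · exact sup_eq_right.mp (Subtype.ext hh)
  · exact absurd (hh ▸ (u ⊔ F.yl k).2) (F.zl_not_mem k hk)

lemma xl_le_of_zl_le {k : ℕ} (hk : k < F.n) {u : L} (h : F.zl k ≤ (u : K)) :
    F.xl k ≤ u := by
  have hm : F.zl k ≤ ((u ⊓ F.xl k : L) : K) := by
    rw [Sublattice.coe_inf]; exact le_inf h (F.zl_le_xl hk)
  rcases covby_mem_pair (F.zl_covby_xl k hk) hm
      (by rw [Sublattice.coe_inf]; exact inf_le_right) with hh|hh
  · exact absurd (hh ▸ (u ⊓ F.xl k).2) (F.zl_not_mem k hk)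
  · exact inf_eq_right.mp (Subtype.ext hh)

lemma i_le_of_t_le {u : L} (h : F.t ≤ (u : K)) : S.i ≤ u := by
  have hm : F.t ≤ ((u ⊓ S.i : L) : K) := by
    rw [Sublattice.coe_inf]; exact le_inf h F.t_lt_i.le
  rcases covby_mem_pair F.t_covby_i hm
      (by rw [Sublattice.coe_inf]; exact inf_le_right) with hh|hh
  · exact absurd (hh ▸ (u ⊓ S.i).2) F.t_not_mem
  · exact inf_eq_right.mp (Subtype.ext hh)

lemma al_inf_t : (S.al : K) ⊓ F.t = F.zl 0 := by
  have hlow : F.zl 0 ≤ (S.al : K) ⊓ F.t :=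
    le_inf (F.zl_le_al F.npos) F.zl_zero_covby_t.lt.le
  rcases covby_mem_pair F.zl_zero_covby_t hlow inf_le_right with hh|hh
  · exact hh
  · exfalso
    have h2 : F.t ≤ (S.al : K) := hh ▸ inf_le_left
    exact S.al_covby_i.lt.not_ge (F.i_le_of_t_le h2)

/-! Right-hand versions via `swap`. -/

lemma zr_le_ar {j : ℕ} (hj : j < F.m) : F.zr j ≤ (S.ar : K) := F.swap.zl_le_al hj
lemma zr_le_t' {j : ℕ} (hj : j < F.m) : F.zr j ≤ F.t := F.swap.zl_le_t hj
lemma zr_lt_t' {j : ℕ} (hj : j < F.m) : F.zr j < F.t := F.swap.zl_lt_t hj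
lemma zr_le_i' {j : ℕ} (hj : j < F.m) : F.zr j ≤ (S.i : K) := F.swap.zl_le_i' hj
lemma not_zr_le_o' {j : ℕ} (hj : j < F.m) : ¬ F.zr j ≤ (S.o : K) := F.swap.not_zl_le_o j hj
lemma yr_le_o' {j : ℕ} (hj : j < F.m) : F.yr j ≤ S.o := F.swap.yl_le_o hj
lemma yr_le_zr' {j : ℕ} (hj : j < F.m) : (F.yr j : K) ≤ F.zr j := F.swap.yl_le_zl hj
lemma zr_le_xr' {j : ℕ} (hj : j < F.m) : F.zr j ≤ (F.xr j : K) := F.swap.zl_le_xl hj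
lemma xr_le_i' {j : ℕ} (hj : j < F.m) : F.xr j ≤ S.i := F.swap.xl_le_i hj
lemma ar_inf_t : (S.ar : K) ⊓ F.t = F.zr 0 := F.swap.al_inf_t
lemma le_yr_of_le_zr {j : ℕ} (hj : j < F.m) {u : L} (h : (u : K) ≤ F.zr j) :
    u ≤ F.yr j := F.swap.le_yl_of_le_zl hj h
lemma xr_le_of_zr_le {j : ℕ} (hj : j < F.m) {u : L} (h : F.zr j ≤ (u : K)) :
    F.xr j ≤ u := F.swap.xl_le_of_zl_le hj h

lemma le_o_of_le_t (hL : IsSPS L) (hS : S.Distributive) {u : L} (h : (u : K) ≤ F.t) :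
    u ≤ S.o := by
  have hui : u < S.i := coe_lt_coe.mp (h.trans_lt F.t_lt_i)
  rcases lt_i_cases hL hS hui with hal|har
  · have h1 : (u : K) ≤ F.zl 0 := le_of_le_of_eq (le_inf hal h) F.al_inf_t
    have h2 := F.le_yl_of_le_zl F.npos h1
    rwa [F.yl_zero] at h2
  · have h1 : (u : K) ≤ F.zr 0 := le_of_le_of_eq (le_inf har h) F.swap.al_inf_t
    have h2 : u ≤ F.yr 0 := F.swap.le_yl_of_le_zl F.mpos h1
    rwa [F.yr_zero] at h2

lemma above_zl {k : ℕ} (hk : k < F.n) {v : K} (h : F.zl k ≤ v) :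
    v ∈ L ∨ v = F.t ∨ ∃ j, j ≤ k ∧ v = F.zl j := by
  rcases F.mem_or_new v with hv | hv | ⟨j, hj, rfl⟩ | ⟨j, hj, rfl⟩
  · exact Or.inl hv
  · exact Or.inr (Or.inl hv)
  · refine Or.inr (Or.inr ⟨j, ?_, rfl⟩)
    by_contra hjk
    exact (F.zl_lt (by omega) hj).not_ge h
  · exact absurd (h.trans (F.zr_le_ar hj)) (F.not_zl_le_ar hk)

lemma below_zl {k : ℕ} (hk : k < F.n) {v : K} (h : v ≤ F.zl k) :
    v ∈ L ∨ ∃ j, k ≤ j ∧ j < F.n ∧ v = F.zl j := by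
  rcases F.mem_or_new v with hv | rfl | ⟨j, hj, rfl⟩ | ⟨j, hj, rfl⟩
  · exact Or.inl hv
  · exact absurd h (F.zl_lt_t hk).not_ge
  · refine Or.inr ⟨j, ?_, hj, rfl⟩
    by_contra hjk
    exact (F.zl_lt (by omega) hk).not_ge h
  · exfalso
    have h1 : F.zr j ≤ (S.al : K) := h.trans (F.zl_le_al hk)
    have hx : F.zr j ≤ (S.ar : K) := F.swap.zl_le_al hj
    have h2 := le_inf h1 hx
    rw [← Sublattice.coe_inf, S.inf_eq] at h2
    exact F.not_zr_le_o' hj h2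

lemma above_t {v : K} (h : F.t ≤ v) : v = F.t ∨ v ∈ L := by
  rcases F.mem_or_new v with hv | rfl | ⟨j, hj, rfl⟩ | ⟨j, hj, rfl⟩
  · exact Or.inr hv
  · exact Or.inl rfl
  · exact absurd h (F.zl_lt_t hj).not_ge
  · exact absurd h (F.zr_lt_t' hj).not_ge

lemma not_xl_le_t {k : ℕ} (hk : k < F.n) : ¬ (F.xl k : K) ≤ F.t := by
  intro h
  have h1 : (F.xl k : K) ≤ F.zl 0 := le_of_le_of_eq (le_inf (F.xl_le_al hk) h) F.al_inf_t
  have h2 := F.le_yl_of_le_zl F.npos h1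
  rw [F.yl_zero] at h2
  exact F.not_xl_le_o k hk h2

lemma not_xl_le_zl {k j : ℕ} (hk : k < F.n) (hj : j < F.n) : ¬ (F.xl k : K) ≤ F.zl j :=
  fun h => F.not_xl_le_o k hk ((F.le_yl_of_le_zl hj h).trans (F.yl_le_o hj))

lemma not_xl_le_zr {k j : ℕ} (hk : k < F.n) (hj : j < F.m) : ¬ (F.xl k : K) ≤ F.zr j := by
  intro h
  refine F.not_xl_le_o k hk ?_
  have h1 : F.xl k ≤ S.ar := h.trans (F.zr_le_ar hj)
  have h2 : F.xl k ≤ S.al ⊓ S.ar := le_inf (F.xl_le_al hk) h1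
  rwa [S.inf_eq] at h2

lemma above_xl {k : ℕ} (hk : k < F.n) {v : K} (h : (F.xl k : K) ≤ v) : v ∈ L := by
  rcases F.mem_or_new v with hv | rfl | ⟨j, hj, rfl⟩ | ⟨j, hj, rfl⟩
  · exact hv
  · exact absurd h (F.not_xl_le_t hk)
  · exact absurd h (F.not_xl_le_zl hk hj)
  · exact absurd h (F.not_xl_le_zr hk hj)

include F in
lemma above_i {v : K} (h : (S.i : K) ≤ v) : v ∈ L := by
  refine F.above_xl F.npos (le_trans ?_ h)
  exact (F.xl_le_i F.npos : F.xl 0 ≤ S.i)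

include F in
lemma below_o {v : K} (h : v ≤ (S.o : K)) : v ∈ L := by
  rcases F.mem_or_new v with hv | rfl | ⟨j, hj, rfl⟩ | ⟨j, hj, rfl⟩
  · exact hv
  · exact absurd ((F.zl_lt_t F.npos).le.trans h) (F.not_zl_le_o 0 F.npos)
  · exact absurd h (F.not_zl_le_o j hj)
  · exact absurd h (F.not_zr_le_o' hj)

lemma xl_inf_t {k : ℕ} (hk : k < F.n) : (F.xl k : K) ⊓ F.t = F.zl k := by
  have hlow : F.zl k ≤ (F.xl k : K) ⊓ F.t := le_inf (F.zl_le_xl hk) (F.zl_le_t hk)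
  rcases F.above_zl hk hlow with hv | hv | ⟨j, hjk, hv⟩
  · exfalso
    have h1 : F.xl k ≤ (⟨_, hv⟩ : L) := F.xl_le_of_zl_le hk hlow
    have h1' : (F.xl k : K) ≤ (F.xl k : K) ⊓ F.t := h1
    exact F.not_xl_le_t hk (h1'.trans inf_le_right)
  · exfalso
    have h2 : F.t ≤ (F.xl k : K) := hv ▸ inf_le_left
    exact S.al_covby_i.lt.not_ge ((F.i_le_of_t_le h2).trans (F.xl_le_al hk))
  · rcases eq_or_lt_of_le hjk with rfl|hjk'
    · exact hv
    · exfalso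
      have h2 : F.zl j ≤ (F.xl k : K) := hv ▸ inf_le_left
      exact (F.xl_lt hjk' hk).not_ge (F.xl_le_of_zl_le (by omega) h2)

lemma zl_sup_zr' {k j : ℕ} (hk : k < F.n) (hj : j < F.m) : F.zl k ⊔ F.zr j = F.t := by
  have hub : F.zl k ⊔ F.zr j ≤ F.t := sup_le (F.zl_le_t hk) (F.zr_le_t' hj)
  rcases F.above_zl hk (le_sup_left : F.zl k ≤ F.zl k ⊔ F.zr j) with hv | hv | ⟨j', hj', hv⟩
  · exfalso
    have h1 : F.xl k ≤ (⟨_, hv⟩ : L) :=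
      F.xl_le_of_zl_le hk (le_sup_left : F.zl k ≤ F.zl k ⊔ F.zr j)
    have h1' : (F.xl k : K) ≤ F.zl k ⊔ F.zr j := h1
    exact F.not_xl_le_t hk (h1'.trans hub)
  · exact hv
  · exfalso
    have h1 : F.zr j ≤ F.zl j' := hv ▸ le_sup_right
    refine F.not_zr_le_o' hj ?_
    have h2 : F.zr j ≤ (S.al : K) := h1.trans (F.zl_le_al (by omega))
    have h3 := le_inf h2 (F.zr_le_ar hj)
    rwa [← Sublattice.coe_inf, S.inf_eq] at h3

lemma zl_inf_zr' {k j : ℕ} (hk : k < F.n) (hj : j < F.m) :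
    F.zl k ⊓ F.zr j = ((F.yl k ⊓ F.yr j : L) : K) := by
  have hmem : F.zl k ⊓ F.zr j ∈ L := by
    refine F.below_o ?_
    have h1 : F.zl k ⊓ F.zr j ≤ (S.al : K) := inf_le_left.trans (F.zl_le_al hk)
    have h2 := le_inf h1 (inf_le_right.trans (F.zr_le_ar hj))
    rwa [← Sublattice.coe_inf, S.inf_eq] at h2
  have h3 : (⟨_, hmem⟩ : L) ≤ F.yl k := F.le_yl_of_le_zl hk inf_le_left
  have h4 : (⟨_, hmem⟩ : L) ≤ F.yr j := F.le_yr_of_le_zr hj inf_le_right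
  refine le_antisymm ?_ ?_
  · exact (le_inf h3 h4 : (⟨_, hmem⟩ : L) ≤ F.yl k ⊓ F.yr j)
  · rw [Sublattice.coe_inf]
    exact le_inf (inf_le_left.trans (F.yl_le_zl hk))
      (inf_le_right.trans (F.yr_le_zr' hj))

lemma xl_inf_zr {k j : ℕ} (hk : k < F.n) (hj : j < F.m) :
    (F.xl k : K) ⊓ F.zr j = ((F.xl k ⊓ F.yr j : L) : K) := by
  have hmem : (F.xl k : K) ⊓ F.zr j ∈ L := by
    refine F.below_o ?_
    have ha : (F.xl k : K) ≤ (S.al : K) := F.xl_le_al hk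
    have h2 := le_inf (inf_le_left.trans ha) (inf_le_right.trans (F.zr_le_ar hj))
    rwa [← Sublattice.coe_inf, S.inf_eq] at h2
  have h4 : (⟨_, hmem⟩ : L) ≤ F.yr j := F.le_yr_of_le_zr hj inf_le_right
  have h5 : (⟨_, hmem⟩ : L) ≤ F.xl k :=
    (inf_le_left : (F.xl k : K) ⊓ F.zr j ≤ (F.xl k : K))
  refine le_antisymm ?_ ?_
  · exact (le_inf h5 h4 : (⟨_, hmem⟩ : L) ≤ F.xl k ⊓ F.yr j)
  · rw [Sublattice.coe_inf]
    exact le_inf inf_le_left (inf_le_right.trans (F.yr_le_zr' hj))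

lemma xl_inf_yr_eq {k j : ℕ} (hk : k < F.n) (hj : j < F.m) :
    F.xl k ⊓ F.yr j = F.yl k ⊓ F.yr j := by
  have h1 : F.yr j ≤ S.o := F.yr_le_o' hj
  refine le_antisymm (le_inf ?_ inf_le_right) ?_
  · rw [← F.o_inf_xl hk]
    exact le_inf (inf_le_right.trans h1) inf_le_left
  · exact le_inf (inf_le_left.trans (F.yl_covby_xl k hk).lt.le) inf_le_right

lemma xl_sup_xr_eq_i {k j : ℕ} (hk : k < F.n) (hj : j < F.m) :
    F.xl k ⊔ F.xr j = S.i := by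
  refine le_antisymm (sup_le (F.xl_le_i hk) (F.xr_le_i' hj)) ?_
  refine F.i_le_of_t_le ?_
  have h1 : F.zl k ⊔ F.zr j ≤ ((F.xl k ⊔ F.xr j : L) : K) := by
    rw [Sublattice.coe_sup]
    exact sup_le ((F.zl_le_xl hk).trans le_sup_left)
      ((F.zr_le_xr' hj).trans le_sup_right)
  exact le_of_eq_of_le (F.zl_sup_zr' hk hj).symm h1

lemma xl_sup_zr {k j : ℕ} (hk : k < F.n) (hj : j < F.m) :
    (F.xl k : K) ⊔ F.zr j = (S.i : K) := by
  have hmem : (F.xl k : K) ⊔ F.zr j ∈ L := F.above_xl hk le_sup_left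
  have h1 : F.xr j ≤ (⟨_, hmem⟩ : L) := F.xr_le_of_zr_le hj le_sup_right
  have h2 : F.xl k ≤ (⟨_, hmem⟩ : L) := le_sup_left
  have h3 : S.i ≤ (⟨_, hmem⟩ : L) := by
    rw [← F.xl_sup_xr_eq_i hk hj]; exact sup_le h2 h1
  exact le_antisymm (sup_le (F.xl_le_i hk) (F.zr_le_i' hj))
    (h3 : (S.i : K) ≤ _)

lemma xl_sup_t {k : ℕ} (hk : k < F.n) : (F.xl k : K) ⊔ F.t = (S.i : K) := by
  have hmem : (F.xl k : K) ⊔ F.t ∈ L := F.above_xl hk le_sup_left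
  have h1 : S.i ≤ (⟨_, hmem⟩ : L) := F.i_le_of_t_le le_sup_right
  exact le_antisymm (sup_le (F.xl_le_i hk) F.t_lt_i.le) (h1 : (S.i : K) ≤ _)

/-! ### The relation `gamma` -/

/-- `a` is the "new" and `b` the "old" element of one of the nontrivial classes. -/
def Pre (a b : K) : Prop :=
  (∃ k, k < F.n ∧ a = F.zl k ∧ b = (F.xl k : K)) ∨
  (a = F.t ∧ b = (S.i : K)) ∨
  (∃ k, k < F.m ∧ a = F.zr k ∧ b = (F.xr k : K))

/-- The equivalence relation whose nontrivial classes are the fork pairs. -/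
def gamma (x y : K) : Prop := x = y ∨ F.Pre x y ∨ F.Pre y x

lemma gamma_of_eq {x y : K} (h : x = y) : F.gamma x y := Or.inl h

lemma gamma_refl (x : K) : F.gamma x x := Or.inl rfl

lemma gamma_of_pair_l {k : ℕ} (hk : k < F.n) : F.gamma (F.zl k) (F.xl k : K) :=
  Or.inr (Or.inl (Or.inl ⟨k, hk, rfl, rfl⟩))

lemma gamma_of_pair_t : F.gamma F.t (S.i : K) :=
  Or.inr (Or.inl (Or.inr (Or.inl ⟨rfl, rfl⟩)))

lemma gamma_of_pair_r {k : ℕ} (hk : k < F.m) : F.gamma (F.zr k) (F.xr k : K) :=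
  Or.inr (Or.inl (Or.inr (Or.inr ⟨k, hk, rfl, rfl⟩)))

lemma gamma_symm {x y : K} (h : F.gamma x y) : F.gamma y x := by
  rcases h with rfl | h | h
  · exact Or.inl rfl
  · exact Or.inr (Or.inr h)
  · exact Or.inr (Or.inl h)

lemma Pre.not_mem {a b : K} (h : F.Pre a b) : a ∉ L := by
  rcases h with ⟨k, hk, rfl, -⟩ | ⟨rfl, -⟩ | ⟨k, hk, rfl, -⟩
  · exact F.zl_not_mem k hk
  · exact F.t_not_mem
  · exact F.zr_not_mem k hk

lemma Pre.mem {a b : K} (h : F.Pre a b) : b ∈ L := by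
  rcases h with ⟨k, hk, -, rfl⟩ | ⟨-, rfl⟩ | ⟨k, hk, -, rfl⟩
  · exact (F.xl k).2
  · exact S.i.2
  · exact (F.xr k).2

lemma zr_injective {j k : ℕ} (hj : j < F.m) (hk : k < F.m) (h : F.zr j = F.zr k) : j = k :=
  F.swap.zl_injective hj hk h

lemma xr_injective {j k : ℕ} (hj : j < F.m) (hk : k < F.m) (h : F.xr j = F.xr k) : j = k :=
  F.swap.xl_injective hj hk h

lemma xr_le_ar' {j : ℕ} (hj : j < F.m) : F.xr j ≤ S.ar := F.swap.xl_le_al hj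

lemma xl_lt_i {k : ℕ} (hk : k < F.n) : F.xl k < S.i :=
  (F.xl_le_al hk).trans_lt S.al_covby_i.lt

lemma xr_lt_i' {j : ℕ} (hj : j < F.m) : F.xr j < S.i :=
  (F.xr_le_ar' hj).trans_lt S.ar_covby_i.lt

lemma xl_ne_xr {k j : ℕ} (hk : k < F.n) (hj : j < F.m) : F.xl k ≠ F.xr j := by
  intro h
  refine F.not_xl_le_o k hk ?_
  rw [← S.inf_eq]
  exact le_inf (F.xl_le_al hk) (h ▸ F.xr_le_ar' hj)

lemma pre_right_unique {a b c : K} (h1 : F.Pre a b) (h2 : F.Pre a c) : b = c := by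
  rcases h1 with ⟨k, hk, rfl, rfl⟩ | ⟨rfl, rfl⟩ | ⟨k, hk, rfl, rfl⟩ <;>
    rcases h2 with ⟨k', hk', he, rfl⟩ | ⟨he, rfl⟩ | ⟨k', hk', he, rfl⟩
  · rw [F.zl_injective hk hk' he]
  · exact absurd he (F.zl_lt_t hk).ne
  · exact absurd he (F.zl_ne_zr hk hk')
  · exact absurd he (F.zl_lt_t hk').ne'
  · rfl
  · exact absurd he (F.zr_lt_t' hk').ne'
  · exact absurd he.symm (F.zl_ne_zr hk' hk)
  · exact absurd he (F.zr_lt_t' hk).ne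
  · rw [F.zr_injective hk hk' he]

lemma pre_left_unique {a b c : K} (h1 : F.Pre b a) (h2 : F.Pre c a) : b = c := by
  rcases h1 with ⟨k, hk, rfl, rfl⟩ | ⟨rfl, rfl⟩ | ⟨k, hk, rfl, rfl⟩ <;>
    rcases h2 with ⟨k', hk', rfl, he⟩ | ⟨rfl, he⟩ | ⟨k', hk', rfl, he⟩
  · rw [F.xl_injective hk hk' (Subtype.ext he)]
  · exact absurd (Subtype.ext he).symm (F.xl_lt_i hk).ne'
  · exact absurd (Subtype.ext he) (F.xl_ne_xr hk hk')
  · exact absurd (Subtype.ext he) (F.xl_lt_i hk').ne'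
  · rfl
  · exact absurd (Subtype.ext he) (F.xr_lt_i' hk').ne'
  · exact absurd (Subtype.ext he).symm (F.xl_ne_xr hk' hk)
  · exact absurd (Subtype.ext he).symm (F.xr_lt_i' hk).ne'
  · rw [F.xr_injective hk hk' (Subtype.ext he)]

lemma gamma_trans {x y z : K} (h1 : F.gamma x y) (h2 : F.gamma y z) : F.gamma x z := by
  rcases h1 with rfl | h1 | h1
  · exact h2
  · rcases h2 with rfl | h2 | h2
    · exact Or.inr (Or.inl h1)
    · exact absurd h1.mem h2.not_mem
    · exact Or.inl (F.pre_left_unique h1 h2)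
  · rcases h2 with rfl | h2 | h2
    · exact Or.inr (Or.inr h1)
    · exact Or.inl (F.pre_right_unique h1 h2)
    · exact absurd h2.mem h1.not_mem

@[simp] lemma swap_n : F.swap.n = F.m := rfl
@[simp] lemma swap_m : F.swap.m = F.n := rfl
@[simp] lemma swap_t : F.swap.t = F.t := rfl
@[simp] lemma swap_zl : F.swap.zl = F.zr := rfl
@[simp] lemma swap_zr : F.swap.zr = F.zl := rfl
@[simp] lemma swap_xl : F.swap.xl = F.xr := rfl
@[simp] lemma swap_xr : F.swap.xr = F.xl := rfl

@[simp] lemma _root_.ForkCongruence.CovSquare.swap_i : S.swap.i = S.i := rfl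

lemma pre_swap {x y : K} : F.swap.Pre x y ↔ F.Pre x y := by
  constructor
  · rintro (⟨k, hk, rfl, h2⟩ | ⟨rfl, h2⟩ | ⟨k, hk, rfl, h2⟩)
    · exact Or.inr (Or.inr ⟨k, hk, rfl, h2⟩)
    · exact Or.inr (Or.inl ⟨rfl, h2⟩)
    · exact Or.inl ⟨k, hk, rfl, h2⟩
  · rintro (⟨k, hk, rfl, h2⟩ | ⟨rfl, h2⟩ | ⟨k, hk, rfl, h2⟩)
    · exact Or.inr (Or.inr ⟨k, hk, rfl, h2⟩)
    · exact Or.inr (Or.inl ⟨rfl, h2⟩)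
    · exact Or.inl ⟨k, hk, rfl, h2⟩

lemma gamma_swap {x y : K} : F.swap.gamma x y ↔ F.gamma x y :=
  or_congr Iff.rfl (or_congr F.pre_swap F.pre_swap)

/-! ### Compatibility of `gamma` with joins and meets -/

lemma sup_zl_case (hL : IsSPS L) (hS : S.Distributive) {k : ℕ} (hk : k < F.n) (c : K) :
    F.gamma (F.zl k ⊔ c) ((F.xl k : K) ⊔ c) := by
  rcases F.mem_or_new c with hc | rfl | ⟨j, hj, rfl⟩ | ⟨j, hj, rfl⟩
  · set u : L := ⟨c, hc⟩ with hudef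
    by_cases hu : c ≤ F.zl k
    · rw [sup_eq_left.mpr hu, sup_eq_left.mpr (hu.trans (F.zl_le_xl hk))]
      exact F.gamma_of_pair_l hk
    · rcases F.above_zl hk (le_sup_left : F.zl k ≤ F.zl k ⊔ c) with hv | hv | ⟨j, hj, hv⟩
      · refine F.gamma_of_eq (le_antisymm
          (sup_le ((F.zl_le_xl hk).trans le_sup_left) le_sup_right) ?_)
        have h1 : F.xl k ≤ (⟨_, hv⟩ : L) :=
          F.xl_le_of_zl_le hk (le_sup_left : F.zl k ≤ F.zl k ⊔ c)
        have h1' : (F.xl k : K) ≤ F.zl k ⊔ c := h1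
        exact sup_le h1' le_sup_right
      · exfalso
        have hct : c ≤ F.t := hv ▸ le_sup_right
        have h2 : u ≤ S.o := F.le_o_of_le_t hL hS hct
        have h3 : c ≤ (F.yl 0 : K) := by rw [F.yl_zero]; exact h2
        have h5 : F.zl k ⊔ c ≤ F.zl 0 := by
          rw [← F.zl_sup_yl' (Nat.zero_le k) hk]
          exact sup_le le_sup_left (h3.trans le_sup_right)
        rw [hv] at h5
        exact (F.zl_lt_t F.npos).not_ge h5
      · have hjn : j < F.n := lt_of_le_of_lt hj hk
        have hcz : c ≤ F.zl j := hv ▸ le_sup_right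
        have hcy : u ≤ F.yl j := F.le_yl_of_le_zl hjn hcz
        have hxja : (F.xl k : K) ≤ (F.xl j : K) := F.xl_anti hj hk
        have hmem : (F.xl k : K) ⊔ c ∈ L :=
          F.above_xl hk (le_sup_left : (F.xl k : K) ≤ (F.xl k : K) ⊔ c)
        have hzj2 : F.zl j ≤ (F.xl k : K) ⊔ c := by
          rw [← hv]
          exact sup_le ((F.zl_le_xl hk).trans le_sup_left) le_sup_right
        have h6 : F.xl j ≤ (⟨_, hmem⟩ : L) := F.xl_le_of_zl_le hjn hzj2
        have h6' : (F.xl j : K) ≤ (F.xl k : K) ⊔ c := h6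
        have hyx : c ≤ (F.xl j : K) := hcy.trans (F.yl_covby_xl j hjn).lt.le
        have hxj : (F.xl k : K) ⊔ c = (F.xl j : K) := le_antisymm (sup_le hxja hyx) h6'
        rw [hv, hxj]
        exact F.gamma_of_pair_l hjn
  · rw [sup_eq_right.mpr (F.zl_le_t hk), F.xl_sup_t hk]
    exact F.gamma_of_pair_t
  · rcases le_or_gt k j with hkj | hjk
    · rw [sup_eq_left.mpr (F.zl_le hkj hj),
        sup_eq_left.mpr ((F.zl_le hkj hj).trans (F.zl_le_xl hk))]
      exact F.gamma_of_pair_l hk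
    · have hjn : j < F.n := by omega
      have h1 : F.zl k ⊔ F.zl j = F.zl j := sup_eq_right.mpr (F.zl_le hjk.le hk)
      have hmem : (F.xl k : K) ⊔ F.zl j ∈ L :=
        F.above_xl hk (le_sup_left : (F.xl k : K) ≤ (F.xl k : K) ⊔ F.zl j)
      have h6 : F.xl j ≤ (⟨_, hmem⟩ : L) :=
        F.xl_le_of_zl_le hjn (le_sup_right : F.zl j ≤ (F.xl k : K) ⊔ F.zl j)
      have h6' : (F.xl j : K) ≤ (F.xl k : K) ⊔ F.zl j := h6
      have hxx : (F.xl k : K) ≤ (F.xl j : K) := F.xl_anti hjk.le hk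
      have h2 : (F.xl k : K) ⊔ F.zl j = (F.xl j : K) :=
        le_antisymm (sup_le hxx (F.zl_le_xl hjn)) h6'
      rw [h1, h2]
      exact F.gamma_of_pair_l hjn
  · rw [F.zl_sup_zr' hk hj, F.xl_sup_zr hk hj]
    exact F.gamma_of_pair_t

lemma inf_zl_case (hL : IsSPS L) (hS : S.Distributive) {k : ℕ} (hk : k < F.n) (c : K) :
    F.gamma (F.zl k ⊓ c) ((F.xl k : K) ⊓ c) := by
  rcases F.mem_or_new c with hc | rfl | ⟨j, hj, rfl⟩ | ⟨j, hj, rfl⟩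
  · set u : L := ⟨c, hc⟩ with hudef
    by_cases hxu : (F.xl k : K) ≤ c
    · rw [inf_eq_left.mpr ((F.zl_le_xl hk).trans hxu), inf_eq_left.mpr hxu]
      exact F.gamma_of_pair_l hk
    · by_cases hw : F.xl k ⊓ u ≤ S.o
      · refine F.gamma_of_eq (le_antisymm (inf_le_inf_right _ (F.zl_le_xl hk)) ?_)
        have h1 : F.xl k ⊓ u ≤ F.yl k := by
          rw [← F.o_inf_xl hk]; exact le_inf hw inf_le_left
        have h1' : (F.xl k : K) ⊓ c ≤ (F.yl k : K) := h1
        exact le_inf (h1'.trans (F.yl_le_zl hk)) inf_le_right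
      · obtain ⟨j, hjn, hwj⟩ :=
          F.grid hL hS (F.xl k ⊓ u) (inf_le_left.trans (F.xl_le_al hk)) hw
        have hkj : k ≤ j := by
          by_contra hh
          have h3 : F.xl j ≤ F.xl k := hwj ▸ inf_le_left
          exact (F.xl_lt (by omega) hk).not_ge h3
        have hwj' : (F.xl k : K) ⊓ c = (F.xl j : K) := congrArg Subtype.val hwj
        have hxjc : (F.xl j : K) ≤ c := hwj' ▸ inf_le_right
        have hlow : F.zl j ≤ F.zl k ⊓ c :=
          le_inf (F.zl_le hkj hjn) ((F.zl_le_xl hjn).trans hxjc)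
        have h2 : F.zl k ⊓ c = F.zl j := by
          rcases F.below_zl hk (inf_le_left : F.zl k ⊓ c ≤ F.zl k)
            with hv | ⟨j', hj'1, hj'2, hv⟩
          · exfalso
            have h6 : F.xl j ≤ (⟨_, hv⟩ : L) := F.xl_le_of_zl_le hjn hlow
            have h6' : (F.xl j : K) ≤ F.zl k ⊓ c := h6
            exact F.not_xl_le_zl hjn hk (h6'.trans inf_le_left)
          · have hle1 : F.zl j ≤ F.zl j' := hv ▸ hlow
            have hj'j : j' ≤ j := by
              by_contra hh
              exact (F.zl_lt (by omega) hj'2).not_ge hle1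
            have hcc : F.zl j' ≤ c := hv ▸ inf_le_right
            have h7 : F.xl j' ≤ u := F.xl_le_of_zl_le hj'2 hcc
            have h8 : F.xl j' ≤ F.xl k := F.xl_anti hj'1 hj'2
            have h9 : F.xl j' ≤ F.xl j := hwj ▸ le_inf h8 h7
            have hjj' : j ≤ j' := by
              by_contra hh
              exact ((F.xl_lt (by omega) hjn).trans_le h9).false
            have : j = j' := le_antisymm hjj' hj'j
            rw [this]
            exact hv
        rw [h2, hwj']
        exact F.gamma_of_pair_l hjn
  · rw [inf_eq_left.mpr (F.zl_le_t hk), F.xl_inf_t hk]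
    exact F.gamma_refl _
  · rcases le_or_gt k j with hkj | hjk
    · rw [inf_eq_right.mpr (F.zl_le hkj hj),
        inf_eq_right.mpr ((F.zl_le hkj hj).trans (F.zl_le_xl hk))]
      exact F.gamma_refl _
    · have h1 : F.zl k ⊓ F.zl j = F.zl k := inf_eq_left.mpr (F.zl_le hjk.le hk)
      have hlow : F.zl k ≤ (F.xl k : K) ⊓ F.zl j :=
        le_inf (F.zl_le_xl hk) (F.zl_le hjk.le hk)
      have h2 : (F.xl k : K) ⊓ F.zl j = F.zl k := by
        rcases covby_mem_pair (F.zl_covby_xl k hk) hlow inf_le_left with h|h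
        · exact h
        · exact absurd (h ▸ inf_le_right) (F.not_xl_le_zl hk (by omega))
      rw [h1, h2]
      exact F.gamma_refl _
  · rw [F.zl_inf_zr' hk hj, F.xl_inf_zr hk hj]
    exact F.gamma_of_eq (congrArg Subtype.val (F.xl_inf_yr_eq hk hj)).symm

lemma sup_t_case (hL : IsSPS L) (hS : S.Distributive) (c : K) :
    F.gamma (F.t ⊔ c) ((S.i : K) ⊔ c) := by
  rcases F.mem_or_new c with hc | rfl | ⟨j, hj, rfl⟩ | ⟨j, hj, rfl⟩
  · by_cases hct : c ≤ F.t
    · rw [sup_eq_left.mpr hct, sup_eq_left.mpr (hct.trans F.t_lt_i.le)]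
      exact F.gamma_of_pair_t
    · refine F.gamma_of_eq (le_antisymm (sup_le_sup_right F.t_lt_i.le _) ?_)
      rcases F.above_t (le_sup_left : F.t ≤ F.t ⊔ c) with hv | hv
      · exact absurd (sup_eq_left.mp hv) hct
      · have h6 : S.i ≤ (⟨_, hv⟩ : L) :=
          F.i_le_of_t_le (le_sup_left : F.t ≤ F.t ⊔ c)
        have h6' : (S.i : K) ≤ F.t ⊔ c := h6
        exact sup_le h6' le_sup_right
  · rw [sup_idem, sup_eq_left.mpr F.t_lt_i.le]
    exact F.gamma_of_pair_t
  · rw [sup_eq_left.mpr (F.zl_le_t hj), sup_eq_left.mpr (F.zl_le_i' hj)]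
    exact F.gamma_of_pair_t
  · rw [sup_eq_left.mpr (F.zr_le_t' hj), sup_eq_left.mpr (F.zr_le_i' hj)]
    exact F.gamma_of_pair_t

lemma inf_t_case (hL : IsSPS L) (hS : S.Distributive) (c : K) :
    F.gamma (F.t ⊓ c) ((S.i : K) ⊓ c) := by
  have hS' : S.swap.Distributive := hS
  rcases F.mem_or_new c with hc | rfl | ⟨j, hj, rfl⟩ | ⟨j, hj, rfl⟩
  · set u : L := ⟨c, hc⟩ with hudef
    by_cases hic : (S.i : K) ≤ c
    · rw [inf_eq_left.mpr (F.t_lt_i.le.trans hic), inf_eq_left.mpr hic]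
      exact F.gamma_of_pair_t
    · have hred : F.t ⊓ c = F.t ⊓ ((S.i : K) ⊓ c) := by
        rw [← inf_assoc, inf_eq_left.mpr F.t_lt_i.le]
      have hwi : S.i ⊓ u < S.i := lt_of_le_of_ne inf_le_left
        (fun h => hic (inf_eq_left.mp h : S.i ≤ u))
      by_cases ho : S.i ⊓ u ≤ S.o
      · refine F.gamma_of_eq ?_
        have h1 : ((S.i ⊓ u : L) : K) ≤ F.t := by
          have h2 : ((S.i ⊓ u : L) : K) ≤ (S.o : K) := ho
          exact h2.trans (F.o_le_zl0.trans (F.zl_le_t F.npos))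
        have h1' : (S.i : K) ⊓ c ≤ F.t := h1
        rw [hred, inf_eq_right.mpr h1']
      · rcases lt_i_cases hL hS hwi with hal | har
        · obtain ⟨j, hjn, hwj⟩ := F.grid hL hS (S.i ⊓ u) hal ho
          have hwj' : (S.i : K) ⊓ c = (F.xl j : K) := congrArg Subtype.val hwj
          rw [hred, hwj', inf_comm F.t, F.xl_inf_t hjn]
          exact F.gamma_of_pair_l hjn
        · have har' : S.i ⊓ u ≤ S.swap.al := har
          have ho' : ¬ S.i ⊓ u ≤ S.swap.o := ho
          obtain ⟨j, hjm, hwj0⟩ := F.swap.grid hL hS' (S.i ⊓ u) har' ho'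
          have hwj : S.i ⊓ u = F.xr j := hwj0
          have hjm' : j < F.m := hjm
          have hwj' : (S.i : K) ⊓ c = (F.xr j : K) := congrArg Subtype.val hwj
          have hx : (F.xr j : K) ⊓ F.t = F.zr j := F.swap.xl_inf_t hjm
          rw [hred, hwj', inf_comm F.t, hx]
          exact F.gamma_of_pair_r hjm'
  · rw [inf_idem, inf_eq_right.mpr F.t_lt_i.le]
    exact F.gamma_refl _
  · rw [inf_eq_right.mpr (F.zl_le_t hj), inf_eq_right.mpr (F.zl_le_i' hj)]
    exact F.gamma_refl _
  · rw [inf_eq_right.mpr (F.zr_le_t' hj), inf_eq_right.mpr (F.zr_le_i' hj)]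
    exact F.gamma_refl _

lemma pre_comp_sup (hL : IsSPS L) (hS : S.Distributive) {a b : K} (h : F.Pre a b) (c : K) :
    F.gamma (a ⊔ c) (b ⊔ c) := by
  have hS' : S.swap.Distributive := hS
  rcases h with ⟨k, hk, rfl, rfl⟩ | ⟨rfl, rfl⟩ | ⟨k, hk, rfl, rfl⟩
  · exact F.sup_zl_case hL hS hk c
  · exact F.sup_t_case hL hS c
  · exact F.gamma_swap.mp (F.swap.sup_zl_case hL hS' hk c)

lemma pre_comp_inf (hL : IsSPS L) (hS : S.Distributive) {a b : K} (h : F.Pre a b) (c : K) :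
    F.gamma (a ⊓ c) (b ⊓ c) := by
  have hS' : S.swap.Distributive := hS
  rcases h with ⟨k, hk, rfl, rfl⟩ | ⟨rfl, rfl⟩ | ⟨k, hk, rfl, rfl⟩
  · exact F.inf_zl_case hL hS hk c
  · exact F.inf_t_case hL hS c
  · exact F.gamma_swap.mp (F.swap.inf_zl_case hL hS' hk c)

lemma gamma_sup_right (hL : IsSPS L) (hS : S.Distributive) {p q : K}
    (hpq : F.gamma p q) (r : K) : F.gamma (p ⊔ r) (q ⊔ r) := by
  rcases hpq with rfl | hp | hp
  · exact F.gamma_refl _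
  · exact F.pre_comp_sup hL hS hp r
  · exact F.gamma_symm (F.pre_comp_sup hL hS hp r)

lemma gamma_inf_right (hL : IsSPS L) (hS : S.Distributive) {p q : K}
    (hpq : F.gamma p q) (r : K) : F.gamma (p ⊓ r) (q ⊓ r) := by
  rcases hpq with rfl | hp | hp
  · exact F.gamma_refl _
  · exact F.pre_comp_inf hL hS hp r
  · exact F.gamma_symm (F.pre_comp_inf hL hS hp r)

end ForkExtension




/-- **Lemma 7.** Let `L` be an SPS lattice and `S` a distributive covering square of `L`. Then
the equivalence relation on `L[S]` (realized as the ambient lattice `K`) whose only nontrivial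
classes are `{z_{l,1}, x_{l,1}}, …, {z_{l,n}, x_{l,n}}`, `{t, i}`,
`{z_{r,1}, x_{r,1}}, …, {z_{r,m}, x_{r,m}}` is a congruence of `L[S]`. -/
theorem distributive_square_gamma_congruence
    {K : Type*} [Lattice K] [Finite K] (L : Sublattice K) (hL : IsSPS L)
    (S : CovSquare L) (F : ForkExtension K L S) (hS : S.Distributive) :
    ∃ θ : LatCon K, ∀ x y : K, θ.rel x y ↔
      (x = y ∨
       (∃ k < F.n, (x = F.zl k ∧ y = (F.xl k : K)) ∨ (x = (F.xl k : K) ∧ y = F.zl k)) ∨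
       ((x = F.t ∧ y = (S.i : K)) ∨ (x = (S.i : K) ∧ y = F.t)) ∨
       (∃ k < F.m, (x = F.zr k ∧ y = (F.xr k : K)) ∨ (x = (F.xr k : K) ∧ y = F.zr k))) := by
  refine ⟨⟨F.gamma, F.gamma_refl, F.gamma_symm, F.gamma_trans, ?_, ?_⟩, ?_⟩
  · intro a b c d h1 h2
    refine F.gamma_trans (F.gamma_sup_right hL hS h1 c) ?_
    have h3 := F.gamma_sup_right hL hS h2 b
    rwa [sup_comm c b, sup_comm d b] at h3
  · intro a b c d h1 h2
    refine F.gamma_trans (F.gamma_inf_right hL hS h1 c) ?_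
    have h3 := F.gamma_inf_right hL hS h2 b
    rwa [inf_comm c b, inf_comm d b] at h3
  · intro x y
    constructor
    · rintro (rfl | (⟨k, hk, rfl, rfl⟩ | ⟨rfl, rfl⟩ | ⟨k, hk, rfl, rfl⟩) |
        (⟨k, hk, rfl, rfl⟩ | ⟨rfl, rfl⟩ | ⟨k, hk, rfl, rfl⟩))
      · exact Or.inl rfl
      · exact Or.inr (Or.inl ⟨k, hk, Or.inl ⟨rfl, rfl⟩⟩)
      · exact Or.inr (Or.inr (Or.inl (Or.inl ⟨rfl, rfl⟩)))
      · exact Or.inr (Or.inr (Or.inr ⟨k, hk, Or.inl ⟨rfl, rfl⟩⟩))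
      · exact Or.inr (Or.inl ⟨k, hk, Or.inr ⟨rfl, rfl⟩⟩)
      · exact Or.inr (Or.inr (Or.inl (Or.inr ⟨rfl, rfl⟩)))
      · exact Or.inr (Or.inr (Or.inr ⟨k, hk, Or.inr ⟨rfl, rfl⟩⟩))
    · rintro (rfl | ⟨k, hk, (⟨rfl, rfl⟩ | ⟨rfl, rfl⟩)⟩ | (⟨rfl, rfl⟩ | ⟨rfl, rfl⟩) |
        ⟨k, hk, (⟨rfl, rfl⟩ | ⟨rfl, rfl⟩)⟩)
      · exact F.gamma_refl _
      · exact F.gamma_of_pair_l hk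
      · exact F.gamma_symm (F.gamma_of_pair_l hk)
      · exact F.gamma_of_pair_t
      · exact F.gamma_symm F.gamma_of_pair_t
      · exact F.gamma_of_pair_r hk
      · exact F.gamma_symm (F.gamma_of_pair_r hk)

end ForkCongruence
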